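/- arXiv:2505.00558 — 2 statements merged into one kernel-verified Lean document; each statement's English description precedes it below -/
import Mathlib

section
/- Let f : P(X)² → ℝ≥0 be a scoring function with f(P,Q)=0 iff P=Q and f continuous. Define η(P₁,P₂) := min over triples (Q₁,Q₂,Q₃) of distributions on X with f(Q₁,Q₂) ≤ f(Q₃,Q₂) of D(Q₁‖P₁)+D(Q₂‖P₂)+D(Q₃‖P₂). Then η(P₁,P₂) > 0 whenever P₁ ≠ P₂. -/
open scoped BigOperators

noncomputable section

variable {X : Type*}

/-- `p` is a probability mass function on the finite alphabet `X`. -/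
def IsProbVec [Fintype X] (p : X → ℝ) : Prop := (∀ x, 0 ≤ p x) ∧ ∑ x, p x = 1

/-- One term of the KL divergence, with the conventions `0 · log (0/q) = 0` and
`p · log (p/0) = +∞` for `p > 0`. -/
def klTerm (p q : ℝ) : EReal :=
  if p = 0 then 0 else if q = 0 then ⊤ else ((p * Real.log (p / q) : ℝ) : EReal)

/-- Kullback–Leibler divergence `D(P‖Q)` on a finite alphabet, valued in `EReal`. -/
def KL [Fintype X] (P Q : X → ℝ) : EReal := ∑ x, klTerm (P x) (Q x)

/-- Generalized Jensen–Shannon divergence. -/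
def GJS [Fintype X] (P Q : X → ℝ) : EReal :=
  KL P (fun x => (P x + Q x) / 2) + KL Q (fun x => (P x + Q x) / 2)

variable [Fintype X]

/-- The exponent function `η(P₁,P₂)`: infimum of `D(Q₁‖P₁)+D(Q₂‖P₂)+D(Q₃‖P₂)` over triples of
distributions with `f(Q₁,Q₂) ≤ f(Q₃,Q₂)`. -/
def eta (f : (X → ℝ) → (X → ℝ) → ℝ) (P₁ P₂ : X → ℝ) : EReal :=
  ⨅ t : {t : (X → ℝ) × (X → ℝ) × (X → ℝ) //
      IsProbVec t.1 ∧ IsProbVec t.2.1 ∧ IsProbVec t.2.2 ∧ f t.1 t.2.1 ≤ f t.2.2 t.2.1},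
    KL t.1.1 P₁ + KL t.1.2.1 P₂ + KL t.1.2.2 P₂

/-- The exponent function `Ω(P₁,P₂,λ)`: infimum of `D(Q₁‖P₁)+D(Q₂‖P₂)` over pairs of
distributions with `f(Q₁,Q₂) ≤ λ`. -/
def Omega (f : (X → ℝ) → (X → ℝ) → ℝ) (P₁ P₂ : X → ℝ) (lam : ℝ) : EReal :=
  ⨅ t : {t : (X → ℝ) × (X → ℝ) // IsProbVec t.1 ∧ IsProbVec t.2 ∧ f t.1 t.2 ≤ lam},
    KL t.1.1 P₁ + KL t.1.2 P₂

/-- The exponent function `Υ(P,λ)`: infimum of `D(Q₁‖P)+D(Q₂‖P)` over pairs of distributions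
with `f(Q₁,Q₂) ≥ λ` (the infimum over the empty set being `+∞`). -/
def Upsilon (f : (X → ℝ) → (X → ℝ) → ℝ) (P : X → ℝ) (lam : ℝ) : EReal :=
  ⨅ t : {t : (X → ℝ) × (X → ℝ) // IsProbVec t.1 ∧ IsProbVec t.2 ∧ lam ≤ f t.1 t.2},
    KL t.1.1 P + KL t.1.2 P

/-- The exponent function `γ(P₁,P₂)`: infimum of `D(Q₁‖P₁)+D(Q₂‖P₁)+D(Q₃‖P₂)` over triples of
distributions with `f(Q₁,Q₃) ≤ f(Q₁,Q₂)`. -/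
def gammaExp (f : (X → ℝ) → (X → ℝ) → ℝ) (P₁ P₂ : X → ℝ) : EReal :=
  ⨅ t : {t : (X → ℝ) × (X → ℝ) × (X → ℝ) //
      IsProbVec t.1 ∧ IsProbVec t.2.1 ∧ IsProbVec t.2.2 ∧ f t.1 t.2.2 ≤ f t.1 t.2.1},
    KL t.1.1 P₁ + KL t.1.2.1 P₁ + KL t.1.2.2 P₂

/-- `min_Q D(Q‖P₁)+D(Q‖P₂)`, i.e. `Ω(P₁,P₂,0)` for a scoring function vanishing exactly on
the diagonal. -/
def OmegaZero (P₁ P₂ : X → ℝ) : EReal :=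
  ⨅ Q : {q : X → ℝ // IsProbVec q}, KL Q.1 P₁ + KL Q.1 P₂


lemma psi_deriv (q : ℝ) (hq : 0 < q) {t : ℝ} (ht : 0 < t) :
    HasDerivAt (fun t : ℝ => t * Real.log t - t * Real.log q - (t - q)^2/2 - t + q)
      (Real.log t - Real.log q - (t - q)) t := by
  have h1 := Real.hasDerivAt_mul_log (ne_of_gt ht)
  have h2 : HasDerivAt (fun t : ℝ => t * Real.log q) (Real.log q) t :=
    (hasDerivAt_id t).mul_const _ |>.congr_deriv (by ring)
  have h3 : HasDerivAt (fun t : ℝ => (t - q)^2/2) (t - q) t := by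
    have := ((hasDerivAt_id t).sub_const q).pow 2
    have := this.div_const 2
    exact this.congr_deriv (by simp only [id]; norm_num)
  have := (((h1.sub h2).sub h3).sub (hasDerivAt_id t)).add_const q
  exact this.congr_deriv (by ring)

lemma core_ineq {p q : ℝ} (hp : 0 < p) (hp1 : p ≤ 1) (hq : 0 < q) (hq1 : q ≤ 1) :
    (p - q)^2/2 + (p - q) ≤ p * Real.log (p / q) := by
  set ψ : ℝ → ℝ := fun t => t * Real.log t - t * Real.log q - (t - q)^2/2 - t + q with hψ
  have hψq : ψ q = 0 := by simp [hψ]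
  have key : 0 ≤ ψ p := by
    have hcont' : Continuous ψ := by
      rw [hψ]
      exact ((((Real.continuous_mul_log.sub (continuous_id.mul continuous_const)).sub
        ((((continuous_id.sub continuous_const).pow 2)).div_const 2)).sub
        continuous_id).add continuous_const)
    have hcont : ∀ a b : ℝ, 0 < a → ContinuousOn ψ (Set.Icc a b) :=
      fun a b _ => hcont'.continuousOn
    rcases lt_trichotomy p q with h | h | h
    · -- antitone on [p, q]
      have hanti : AntitoneOn ψ (Set.Icc p q) := by
        apply antitoneOn_of_deriv_nonpos (convex_Icc p q) (hcont p q hp)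
        · intro t ht
          rw [interior_Icc] at ht
          exact (psi_deriv q hq (lt_trans hp ht.1)).differentiableAt.differentiableWithinAt
        · intro t ht
          rw [interior_Icc] at ht
          have ht0 : 0 < t := lt_trans hp ht.1
          rw [(psi_deriv q hq ht0).deriv]
          have h1 : Real.log t - Real.log q ≤ t/q - 1 := by
            rw [← Real.log_div (ne_of_gt ht0) (ne_of_gt hq)]
            exact Real.log_le_sub_one_of_pos (div_pos ht0 hq)
          have h2 : t/q - 1 ≤ t - q := by
            rw [div_sub_one (ne_of_gt hq), div_le_iff₀ hq]
            nlinarith [ht.2, hq1]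
          linarith
      have := hanti (Set.left_mem_Icc.2 (le_of_lt h)) (Set.right_mem_Icc.2 (le_of_lt h)) (le_of_lt h)
      rw [hψq] at this; exact this
    · subst h; rw [hψq]
    · -- monotone on [q, p]
      have hmono : MonotoneOn ψ (Set.Icc q p) := by
        apply monotoneOn_of_deriv_nonneg (convex_Icc q p) (hcont q p hq)
        · intro t ht
          rw [interior_Icc] at ht
          exact (psi_deriv q hq (lt_trans hq ht.1)).differentiableAt.differentiableWithinAt
        · intro t ht
          rw [interior_Icc] at ht
          have ht0 : 0 < t := lt_trans hq ht.1
          rw [(psi_deriv q hq ht0).deriv]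
          have h1 : Real.log q - Real.log t ≤ q/t - 1 := by
            rw [← Real.log_div (ne_of_gt hq) (ne_of_gt ht0)]
            exact Real.log_le_sub_one_of_pos (div_pos hq ht0)
          have h2 : q/t - 1 ≤ q - t := by
            rw [div_sub_one (ne_of_gt ht0), div_le_iff₀ ht0]
            nlinarith [lt_of_lt_of_le ht.2 hp1, ht.1]
          linarith
      have := hmono (Set.left_mem_Icc.2 (le_of_lt h)) (Set.right_mem_Icc.2 (le_of_lt h)) (le_of_lt h)
      rw [hψq] at this; exact this
  have : ψ p = p * Real.log (p/q) - (p-q)^2/2 - (p - q) := by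
    rw [hψ]; simp only []
    rw [Real.log_div (ne_of_gt hp) (ne_of_gt hq)]
    ring
  rw [this] at key; linarith


lemma ereal_coe_sum {α : Type*} (s : Finset α) (g : α → ℝ) :
    ((∑ x ∈ s, g x : ℝ) : EReal) = ∑ x ∈ s, ((g x : ℝ) : EReal) := by
  classical
  induction s using Finset.induction_on with
  | empty => simp
  | insert _ _ h ih => rw [Finset.sum_insert h, Finset.sum_insert h, EReal.coe_add, ih]

lemma IsProbVec.le_one {p : X → ℝ} (h : IsProbVec p) (x : X) : p x ≤ 1 := by
  have := Finset.single_le_sum (f := p) (fun i _ => h.1 i) (Finset.mem_univ x)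
  rwa [h.2] at this

lemma klTerm_ge {p q : ℝ} (hp : 0 ≤ p) (hp1 : p ≤ 1) (hq : 0 ≤ q) (hq1 : q ≤ 1) :
    (((p - q)^2/2 + (p - q) : ℝ) : EReal) ≤ klTerm p q := by
  rcases eq_or_lt_of_le hp with h | h
  · subst h
    rw [show klTerm 0 q = ((0:ℝ) : EReal) by simp [klTerm], EReal.coe_le_coe_iff]
    nlinarith
  · rcases eq_or_lt_of_le hq with h' | h'
    · simp [klTerm, h.ne', ← h']
    · rw [show klTerm p q = ((p * Real.log (p / q) : ℝ) : EReal) by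
        simp [klTerm, h.ne', h'.ne'], EReal.coe_le_coe_iff]
      exact core_ineq h hp1 h' hq1

lemma KL_ge {P Q : X → ℝ} (hP : IsProbVec P) (hQ : IsProbVec Q) :
    (((∑ x, (P x - Q x)^2)/2 : ℝ) : EReal) ≤ KL P Q := by
  have h2 : ∑ x, ((((P x - Q x)^2/2 + (P x - Q x) : ℝ)) : EReal) ≤ KL P Q :=
    Finset.sum_le_sum fun x _ => klTerm_ge (hP.1 x) (hP.le_one x) (hQ.1 x) (hQ.le_one x)
  rw [← ereal_coe_sum] at h2
  have h3 : (∑ x, ((P x - Q x)^2/2 + (P x - Q x)) : ℝ) = (∑ x, (P x - Q x)^2)/2 := by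
    rw [Finset.sum_add_distrib, ← Finset.sum_div, Finset.sum_sub_distrib, hP.2, hQ.2]
    ring
  rwa [h3] at h2

lemma KL_nonneg {P Q : X → ℝ} (hP : IsProbVec P) (hQ : IsProbVec Q) : 0 ≤ KL P Q := by
  refine le_trans ?_ (KL_ge hP hQ)
  rw [show ((0:EReal)) = ((0:ℝ) : EReal) by simp, EReal.coe_le_coe_iff]
  positivity

lemma tendsto_aux {Q : ℕ → X → ℝ} {P : X → ℝ}
    (h : ∀ n x, (Q n x - P x)^2 ≤ 2/((n:ℝ)+1)) :
    Filter.Tendsto Q Filter.atTop (nhds P) := by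
  rw [tendsto_pi_nhds]
  intro x
  have habs : Filter.Tendsto (fun n => |Q n x - P x|) Filter.atTop (nhds 0) := by
    refine squeeze_zero (fun n => abs_nonneg _) (fun n => Real.abs_le_sqrt (h n x)) ?_
    have h2 : Filter.Tendsto (fun n : ℕ => 2/((n:ℝ)+1)) Filter.atTop (nhds 0) := by
      have := (tendsto_const_div_atTop_nhds_zero_nat (2:ℝ)).comp
        (Filter.tendsto_add_atTop_nat 1)
      convert this using 2 with n
      simp [Function.comp]
    exact (Real.continuous_sqrt.tendsto' 0 0 Real.sqrt_zero).comp h2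
  have h4 := ((tendsto_zero_iff_abs_tendsto_zero (fun n => Q n x - P x)).2 habs).add_const (P x)
  simpa using h4

section EtaPosAux

variable {X : Type*} [Fintype X]

lemma eta_pos_aux_add3 {a b c e : EReal} (hb : 0 ≤ b) (hc : 0 ≤ c)
    (h : a + b + c < e) : a < e := by
  refine lt_of_le_of_lt ?_ h
  calc a = a + 0 + 0 := by simp
    _ ≤ a + b + c := add_le_add (add_le_add le_rfl hb) hc

lemma eta_pos_key {Q : ℕ → X → ℝ} {P : X → ℝ} (hQ : ∀ n, IsProbVec (Q n)) (hP : IsProbVec P)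
    (hKL : ∀ n, KL (Q n) P < (((1:ℝ)/((n:ℝ)+1) : ℝ) : EReal)) :
    Filter.Tendsto Q Filter.atTop (nhds P) := by
  apply tendsto_aux
  intro n x
  have h1 := lt_of_le_of_lt (KL_ge (hQ n) hP) (hKL n)
  rw [EReal.coe_lt_coe_iff] at h1
  have h2 : (Q n x - P x)^2 ≤ ∑ y, (Q n y - P y)^2 :=
    Finset.single_le_sum (f := fun y => (Q n y - P y)^2) (fun y _ => sq_nonneg _) (Finset.mem_univ x)
  have hn : (0:ℝ) < (n:ℝ) + 1 := by positivity
  rw [div_lt_div_iff₀ (by norm_num) hn] at h1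
  rw [div_eq_mul_inv, mul_comm, inv_mul_eq_div, le_div_iff₀ hn]
  nlinarith [h1, h2, hn]

end EtaPosAux

/-- `η(P₁,P₂) > 0` whenever `P₁ ≠ P₂`, for any continuous scoring function vanishing exactly
on the diagonal. -/
theorem eta_pos [Nonempty X] (f : (X → ℝ) → (X → ℝ) → ℝ)
    (hf0 : ∀ P Q, IsProbVec P → IsProbVec Q → 0 ≤ f P Q)
    (hfz : ∀ P Q, IsProbVec P → IsProbVec Q → (f P Q = 0 ↔ P = Q))
    (hfc : ContinuousOn (fun pq : (X → ℝ) × (X → ℝ) => f pq.1 pq.2)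
      {pq | IsProbVec pq.1 ∧ IsProbVec pq.2})
    (P₁ P₂ : X → ℝ) (hP₁ : IsProbVec P₁) (hP₂ : IsProbVec P₂) (hne : P₁ ≠ P₂) :
    0 < eta f P₁ P₂ := by
  by_contra hcon
  push_neg at hcon
  have hex : ∀ n : ℕ, ∃ t : {t : (X → ℝ) × (X → ℝ) × (X → ℝ) //
      IsProbVec t.1 ∧ IsProbVec t.2.1 ∧ IsProbVec t.2.2 ∧ f t.1 t.2.1 ≤ f t.2.2 t.2.1},
      KL t.1.1 P₁ + KL t.1.2.1 P₂ + KL t.1.2.2 P₂ < (((1:ℝ)/((n:ℝ)+1) : ℝ) : EReal) := by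
    intro n
    have hpos : (0:EReal) < (((1:ℝ)/((n:ℝ)+1) : ℝ) : EReal) := by
      rw [show (0:EReal) = ((0:ℝ) : EReal) by simp, EReal.coe_lt_coe_iff]
      positivity
    have h := lt_of_le_of_lt hcon hpos
    rw [eta] at h
    exact iInf_lt_iff.mp h
  choose t ht using hex
  set q1 : ℕ → X → ℝ := fun n => (t n).1.1 with hq1def
  set q2 : ℕ → X → ℝ := fun n => (t n).1.2.1 with hq2def
  set q3 : ℕ → X → ℝ := fun n => (t n).1.2.2 with hq3def
  have hq1 : ∀ n, IsProbVec (q1 n) := fun n => (t n).2.1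
  have hq2 : ∀ n, IsProbVec (q2 n) := fun n => (t n).2.2.1
  have hq3 : ∀ n, IsProbVec (q3 n) := fun n => (t n).2.2.2.1
  have hcons : ∀ n, f (q1 n) (q2 n) ≤ f (q3 n) (q2 n) := fun n => (t n).2.2.2.2
  have hKL1 : ∀ n, KL (q1 n) P₁ < (((1:ℝ)/((n:ℝ)+1) : ℝ) : EReal) := fun n =>
    eta_pos_aux_add3 (KL_nonneg (hq2 n) hP₂) (KL_nonneg (hq3 n) hP₂) (ht n)
  have hKL2 : ∀ n, KL (q2 n) P₂ < (((1:ℝ)/((n:ℝ)+1) : ℝ) : EReal) := by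
    intro n
    refine eta_pos_aux_add3 (KL_nonneg (hq1 n) hP₁) (KL_nonneg (hq3 n) hP₂) ?_
    calc KL (q2 n) P₂ + KL (q1 n) P₁ + KL (q3 n) P₂
        = KL (q1 n) P₁ + KL (q2 n) P₂ + KL (q3 n) P₂ := by
          rw [add_comm (KL (q2 n) P₂) (KL (q1 n) P₁)]
      _ < _ := ht n
  have hKL3 : ∀ n, KL (q3 n) P₂ < (((1:ℝ)/((n:ℝ)+1) : ℝ) : EReal) := by
    intro n
    refine eta_pos_aux_add3 (KL_nonneg (hq1 n) hP₁) (KL_nonneg (hq2 n) hP₂) ?_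
    calc KL (q3 n) P₂ + KL (q1 n) P₁ + KL (q2 n) P₂
        = KL (q1 n) P₁ + KL (q2 n) P₂ + KL (q3 n) P₂ := by abel
      _ < _ := ht n
  have ht1 : Filter.Tendsto q1 Filter.atTop (nhds P₁) := eta_pos_key hq1 hP₁ hKL1
  have ht2 : Filter.Tendsto q2 Filter.atTop (nhds P₂) := eta_pos_key hq2 hP₂ hKL2
  have ht3 : Filter.Tendsto q3 Filter.atTop (nhds P₂) := eta_pos_key hq3 hP₂ hKL3
  set s : Set ((X → ℝ) × (X → ℝ)) := {pq | IsProbVec pq.1 ∧ IsProbVec pq.2} with hs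
  have hpair1 : Filter.Tendsto (fun n => (q1 n, q2 n)) Filter.atTop (nhdsWithin (P₁, P₂) s) :=
    tendsto_nhdsWithin_of_tendsto_nhds_of_eventually_within _
      (ht1.prodMk_nhds ht2) (Filter.Eventually.of_forall fun n => ⟨hq1 n, hq2 n⟩)
  have hpair2 : Filter.Tendsto (fun n => (q3 n, q2 n)) Filter.atTop (nhdsWithin (P₂, P₂) s) :=
    tendsto_nhdsWithin_of_tendsto_nhds_of_eventually_within _
      (ht3.prodMk_nhds ht2) (Filter.Eventually.of_forall fun n => ⟨hq3 n, hq2 n⟩)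
  have hf1 : Filter.Tendsto (fun n => f (q1 n) (q2 n)) Filter.atTop (nhds (f P₁ P₂)) :=
    (hfc (P₁, P₂) ⟨hP₁, hP₂⟩).tendsto.comp hpair1
  have hf2 : Filter.Tendsto (fun n => f (q3 n) (q2 n)) Filter.atTop (nhds (f P₂ P₂)) :=
    (hfc (P₂, P₂) ⟨hP₂, hP₂⟩).tendsto.comp hpair2
  have hle : f P₁ P₂ ≤ f P₂ P₂ := le_of_tendsto_of_tendsto' hf1 hf2 hcons
  have h22 : f P₂ P₂ = 0 := (hfz P₂ P₂ hP₂ hP₂).2 rfl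
  have h12 : f P₁ P₂ = 0 := le_antisymm (h22 ▸ hle) (hf0 P₁ P₂ hP₁ hP₂)
  exact hne ((hfz P₁ P₂ hP₁ hP₂).1 h12)
end
end

section
/- Let P be a distribution on a finite alphabet X, and suppose X^n and Y^n are independent sequences, each drawn i.i.d. from P. Fix a continuous scoring function f : P(X)² → ℝ≥0 and λ > 0. Then the probability that f(T̂_{X^n}, T̂_{Y^n}) > λ is at most (n+1)^{2|X|} · exp(−n·Υ(P,λ)), where Υ(P,λ) := inf over pairs (Q₁,Q₂) with f(Q₁,Q₂) ≥ λ of D(Q₁‖P)+D(Q₂‖P). -/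
open scoped BigOperators

noncomputable section

variable {X : Type*}

variable [Fintype X]

/-- Empirical distribution (type) of a length-`n` sequence. -/
def empDist [DecidableEq X] (n : ℕ) (x : Fin n → X) : X → ℝ :=
  fun a => ((Finset.univ.filter (fun i => x i = a)).card : ℝ) / n

section AuxLemmas
variable [DecidableEq X]

lemma coe_sum' {α : Type*} (s : Finset α) (f : α → ℝ) :
    ((∑ a ∈ s, f a : ℝ) : EReal) = ∑ a ∈ s, (f a : EReal) := by
  induction s using Finset.cons_induction with
  | empty => simp
  | cons a s ha ih => rw [Finset.sum_cons, Finset.sum_cons, EReal.coe_add, ih]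

lemma sum_cnt (n : ℕ) (x : Fin n → X) :
    ∑ a, ((Finset.univ.filter (fun i => x i = a)).card) = n := by
  rw [← Finset.card_eq_sum_card_fiberwise (fun i _ => Finset.mem_univ (x i)), Finset.card_univ,
    Fintype.card_fin]

lemma empDist_isProbVec {n : ℕ} (hn : 0 < n) (x : Fin n → X) : IsProbVec (empDist n x) := by
  constructor
  · intro a; exact div_nonneg (Nat.cast_nonneg _) (Nat.cast_nonneg _)
  · unfold empDist
    rw [← Finset.sum_div]
    rw [show (∑ a, (((Finset.univ.filter (fun i => x i = a)).card : ℝ))) = ((n : ℕ) : ℝ) by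
      rw [← Nat.cast_sum, sum_cnt n x]]
    field_simp

lemma prod_fiber (n : ℕ) (x : Fin n → X) (g : X → ℝ) :
    ∏ i, g (x i) = ∏ a, g a ^ ((Finset.univ.filter (fun i => x i = a)).card) := by
  rw [← Finset.prod_fiberwise_of_maps_to (fun i _ => Finset.mem_univ (x i)) (fun i => g (x i))]
  refine Finset.prod_congr rfl (fun a _ => ?_)
  rw [Finset.prod_congr rfl (fun i hi => by rw [(Finset.mem_filter.mp hi).2]),
    Finset.prod_const]

omit [Fintype X] in
lemma empDist_eq_zero_iff {n : ℕ} (hn : 0 < n) (x : Fin n → X) (a : X) :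
    empDist n x a = 0 ↔ (Finset.univ.filter (fun i => x i = a)).card = 0 := by
  unfold empDist
  rw [div_eq_zero_iff]
  constructor
  · rintro (h | h)
    · exact_mod_cast h
    · exact absurd h (by positivity)
  · intro h; left; exact_mod_cast h

omit [Fintype X] in
lemma prod_eq_zero_of_emp {n : ℕ} (x : Fin n → X) (P : X → ℝ) (a : X)
    (hTa : empDist n x a ≠ 0) (hPa : P a = 0) : ∏ i, P (x i) = 0 := by
  have hc : (Finset.univ.filter (fun i => x i = a)).card ≠ 0 := by
    intro h; exact hTa (by unfold empDist; rw [h]; simp)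
  obtain ⟨i, hi⟩ := Finset.card_ne_zero.mp hc
  exact Finset.prod_eq_zero (Finset.mem_univ i)
    (by rw [(Finset.mem_filter.mp hi).2, hPa])

lemma pointwise_finite {n : ℕ} (hn : 0 < n) (x : Fin n → X) (P : X → ℝ) (hP : IsProbVec P)
    (hfin : ∀ a, empDist n x a ≠ 0 → P a ≠ 0) :
    ∃ r : ℝ, KL (empDist n x) P = (r : EReal) ∧
      ∏ i, P (x i) = Real.exp (-(n * r)) * ∏ i, empDist n x (x i) := by
  set T := empDist n x with hT
  refine ⟨∑ a, (if T a = 0 then 0 else T a * Real.log (T a / P a)), ?_, ?_⟩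
  · unfold KL
    rw [coe_sum']
    refine Finset.sum_congr rfl (fun a _ => ?_)
    unfold klTerm
    by_cases h : T a = 0
    · simp [h]
    · rw [if_neg h, if_neg (hfin a h), if_neg h]
  · rw [prod_fiber n x P, prod_fiber n x T,
      show -((n:ℝ) * ∑ a, (if T a = 0 then 0 else T a * Real.log (T a / P a)))
        = ∑ a, -((n:ℝ) * (if T a = 0 then 0 else T a * Real.log (T a / P a))) by
        rw [Finset.mul_sum, ← Finset.sum_neg_distrib],
      Real.exp_sum, ← Finset.prod_mul_distrib]
    refine Finset.prod_congr rfl (fun a _ => ?_)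
    set c := (Finset.univ.filter (fun i => x i = a)).card with hc
    by_cases h : T a = 0
    · have hc0 : c = 0 := (empDist_eq_zero_iff hn x a).mp h
      simp [h, hc0]
    · have hcn : c ≠ 0 := fun h0 => h ((empDist_eq_zero_iff hn x a).mpr h0)
      have hTa : T a = (c : ℝ) / n := rfl
      have hTpos : 0 < T a := lt_of_le_of_ne (by rw [hTa]; positivity) (Ne.symm h)
      have hPpos : 0 < P a := lt_of_le_of_ne (hP.1 a) (Ne.symm (hfin a h))
      rw [if_neg h]
      have hnc : (n : ℝ) * T a = c := by rw [hTa]; field_simp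
      have : (n : ℝ) * (T a * Real.log (T a / P a)) = (c : ℝ) * Real.log (T a / P a) := by
        rw [← mul_assoc, hnc]
      rw [this]
      have hlog : -((c : ℝ) * Real.log (T a / P a)) = (c : ℝ) * Real.log (P a / T a) := by
        rw [show Real.log (P a / T a) = -Real.log (T a / P a) by rw [← Real.log_inv, inv_div]]
        ring
      rw [hlog, Real.exp_nat_mul, Real.exp_log (by positivity), ← mul_pow,
        div_mul_cancel₀ _ (ne_of_gt hTpos)]

lemma sum_prod_emp_le {n : ℕ} (hn : 0 < n) :
    ∑ x : Fin n → X, ENNReal.ofReal (∏ i, empDist n x (x i)) ≤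
      ((n + 1 : ℕ) : ENNReal) ^ (Fintype.card X) := by
  classical
  set S := Finset.image (fun x : Fin n → X => empDist n x) Finset.univ with hS
  have hfib := Finset.sum_fiberwise_of_maps_to
    (s := (Finset.univ : Finset (Fin n → X))) (g := fun x : Fin n → X => empDist n x) (t := S)
    (fun x _ => Finset.mem_image_of_mem _ (Finset.mem_univ x))
    (fun x => ENNReal.ofReal (∏ i, empDist n x (x i)))
  rw [← hfib]
  have step1 : ∀ Q ∈ S,
      (∑ x ∈ Finset.univ.filter (fun x : Fin n → X => empDist n x = Q),
        ENNReal.ofReal (∏ i, empDist n x (x i))) ≤ 1 := by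
    intro Q hQ
    obtain ⟨y, _, hy⟩ := Finset.mem_image.mp hQ
    have hQnn : ∀ a, 0 ≤ Q a := hy ▸ (empDist_isProbVec hn y).1
    have hQsum : ∑ a, Q a = 1 := hy ▸ (empDist_isProbVec hn y).2
    calc (∑ x ∈ Finset.univ.filter (fun x : Fin n → X => empDist n x = Q),
            ENNReal.ofReal (∏ i, empDist n x (x i)))
        = ∑ x ∈ Finset.univ.filter (fun x : Fin n → X => empDist n x = Q),
            ENNReal.ofReal (∏ i, Q (x i)) := by
          refine Finset.sum_congr rfl (fun x hx => ?_)
          rw [(Finset.mem_filter.mp hx).2]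
      _ ≤ ∑ x : Fin n → X, ENNReal.ofReal (∏ i, Q (x i)) :=
          Finset.sum_le_sum_of_subset (Finset.filter_subset _ _)
      _ = ENNReal.ofReal (∑ x : Fin n → X, ∏ i, Q (x i)) := by
          rw [ENNReal.ofReal_sum_of_nonneg
            (fun x _ => Finset.prod_nonneg (fun i _ => hQnn (x i)))]
      _ = 1 := by
          rw [show (∑ x : Fin n → X, ∏ i, Q (x i)) = ∏ _i : Fin n, ∑ a, Q a by
            rw [Finset.prod_univ_sum]
            rw [← Fintype.piFinset_univ]]
          simp [hQsum]
  have step2 : (S.card : ENNReal) ≤ ((n + 1 : ℕ) : ENNReal) ^ (Fintype.card X) := by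
    have hsub : S ⊆ Finset.image
        (fun c : X → Fin (n+1) => fun a => ((c a : ℕ) : ℝ) / n) Finset.univ := by
      intro Q hQ
      obtain ⟨y, _, hy⟩ := Finset.mem_image.mp hQ
      refine Finset.mem_image.mpr ⟨fun a => ⟨(Finset.univ.filter (fun i => y i = a)).card, ?_⟩,
        Finset.mem_univ _, ?_⟩
      · exact Nat.lt_succ_of_le (le_trans (Finset.card_filter_le _ _)
          (le_of_eq (Finset.card_univ.trans (Fintype.card_fin n))))
      · exact hy
    calc (S.card : ENNReal) ≤ ((Finset.image
          (fun c : X → Fin (n+1) => fun a => ((c a : ℕ) : ℝ) / n) Finset.univ).card : ENNReal) :=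
          Nat.cast_le.mpr (Finset.card_le_card hsub)
      _ ≤ ((Finset.univ : Finset (X → Fin (n+1))).card : ENNReal) :=
          Nat.cast_le.mpr (Finset.card_image_le)
      _ = ((n + 1 : ℕ) : ENNReal) ^ (Fintype.card X) := by
          rw [Finset.card_univ, Fintype.card_fun, Fintype.card_fin]
          push_cast; ring
  calc (∑ Q ∈ S, ∑ x ∈ Finset.univ.filter (fun x : Fin n → X => empDist n x = Q),
          ENNReal.ofReal (∏ i, empDist n x (x i)))
      ≤ ∑ _Q ∈ S, (1 : ENNReal) := Finset.sum_le_sum step1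
    _ = (S.card : ENNReal) := by rw [Finset.sum_const, nsmul_eq_mul, mul_one]
    _ ≤ _ := step2

omit [Fintype X] in
lemma emp_self_pos {n : ℕ} (hn : 0 < n) (x : Fin n → X) :
    0 < ∏ i, empDist n x (x i) := by
  apply Finset.prod_pos
  intro i _
  have h1 : 0 < (Finset.univ.filter (fun j => x j = x i)).card :=
    Finset.card_pos.mpr ⟨i, by simp⟩
  exact div_pos (by exact_mod_cast h1) (by exact_mod_cast hn)


end AuxLemmas

open Classical in
/-- Method-of-types bound: the probability that the pair of empirical distributions of two
independent i.i.d. sequences (both from `P`) has score exceeding `λ` is at most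
`(n+1)^{2|X|} · exp(−n·Υ(P,λ))`. -/
theorem prob_score_gt_bound [Nonempty X] [DecidableEq X]
    (f : (X → ℝ) → (X → ℝ) → ℝ)
    (hf0 : ∀ P Q, IsProbVec P → IsProbVec Q → 0 ≤ f P Q)
    (hfc : ContinuousOn (fun pq : (X → ℝ) × (X → ℝ) => f pq.1 pq.2)
      {pq | IsProbVec pq.1 ∧ IsProbVec pq.2})
    (P : X → ℝ) (hP : IsProbVec P)
    (n : ℕ) (hn : 0 < n) (lam : ℝ) (hlam : 0 < lam) :
    ENNReal.ofReal
        (∑ p : (Fin n → X) × (Fin n → X),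
          if lam < f (empDist n p.1) (empDist n p.2) then
            (∏ i, P (p.1 i)) * (∏ i, P (p.2 i)) else 0) ≤
      ((n + 1 : ENNReal)) ^ (2 * Fintype.card X) *
        EReal.exp (-(n : EReal) * Upsilon f P lam) := by
  set U := Upsilon f P lam with hU
  set E := EReal.exp (-(n : EReal) * U) with hE
  -- Step 1: split ofReal over the sum
  have hnn : ∀ p : (Fin n → X) × (Fin n → X), 0 ≤
      (if lam < f (empDist n p.1) (empDist n p.2) then
        (∏ i, P (p.1 i)) * (∏ i, P (p.2 i)) else 0) := by
    intro p
    split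
    · exact mul_nonneg (Finset.prod_nonneg fun i _ => hP.1 _)
        (Finset.prod_nonneg fun i _ => hP.1 _)
    · exact le_refl _
  rw [ENNReal.ofReal_sum_of_nonneg (fun p _ => hnn p)]
  -- Step 2: per-pair bound
  have key : ∀ p : (Fin n → X) × (Fin n → X),
      ENNReal.ofReal (if lam < f (empDist n p.1) (empDist n p.2) then
        (∏ i, P (p.1 i)) * (∏ i, P (p.2 i)) else 0) ≤
      E * (ENNReal.ofReal (∏ i, empDist n p.1 (p.1 i)) *
           ENNReal.ofReal (∏ i, empDist n p.2 (p.2 i))) := by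
    rintro ⟨x, y⟩
    by_cases hbad : lam < f (empDist n x) (empDist n y)
    swap
    · simp [hbad]
    rw [if_pos hbad]
    have hTx := empDist_isProbVec hn x
    have hTy := empDist_isProbVec hn y
    have hUle : U ≤ KL (empDist n x) P + KL (empDist n y) P := by
      rw [hU, Upsilon]
      exact iInf_le (ι := {t : (X → ℝ) × (X → ℝ) // IsProbVec t.1 ∧ IsProbVec t.2 ∧ lam ≤ f t.1 t.2})
        (fun t => KL t.1.1 P + KL t.1.2 P)
        ⟨(empDist n x, empDist n y), hTx, hTy, le_of_lt hbad⟩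
    have hTxpos : (0:ℝ) < ∏ i, empDist n x (x i) := emp_self_pos hn x
    have hTypos : (0:ℝ) < ∏ i, empDist n y (y i) := emp_self_pos hn y
    by_cases hUbot : U = ⊥
    · have h1 : (-(n : EReal)) * (⊥ : EReal) = ⊤ := by
        rw [show (-(n : EReal)) = ((-(n : ℝ) : ℝ) : EReal) by
          rw [EReal.coe_neg, EReal.coe_coe_eq_natCast]]
        exact EReal.coe_mul_bot_of_neg (neg_lt_zero.mpr (by exact_mod_cast hn))
      have hEtop : E = ⊤ := by
        rw [hE, hUbot, h1, EReal.exp_top]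
      rw [hEtop, ENNReal.top_mul]
      · exact le_top
      · exact mul_ne_zero (by simp [hTxpos]) (by simp [hTypos])
    by_cases hfx : ∀ a, empDist n x a ≠ 0 → P a ≠ 0
    swap
    · push_neg at hfx
      obtain ⟨a, ha, hPa⟩ := hfx
      rw [prod_eq_zero_of_emp x P a ha hPa, zero_mul]
      simp
    by_cases hfy : ∀ a, empDist n y a ≠ 0 → P a ≠ 0
    swap
    · push_neg at hfy
      obtain ⟨a, ha, hPa⟩ := hfy
      rw [prod_eq_zero_of_emp y P a ha hPa, mul_zero]
      simp
    obtain ⟨r₁, hK₁, hprod₁⟩ := pointwise_finite hn x P hP hfx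
    obtain ⟨r₂, hK₂, hprod₂⟩ := pointwise_finite hn y P hP hfy
    rw [hK₁, hK₂, ← EReal.coe_add] at hUle
    have hUtop : U ≠ ⊤ := fun h => by
      rw [h, top_le_iff] at hUle
      exact EReal.coe_ne_top _ hUle
    set u := U.toReal with hu
    have hUu : U = (u : EReal) := (EReal.coe_toReal hUtop hUbot).symm
    have hur : u ≤ r₁ + r₂ := by
      rw [hUu] at hUle; exact_mod_cast hUle
    have hEeq : E = ENNReal.ofReal (Real.exp (-(n * u))) := by
      rw [hE, hUu]
      rw [show (-(n : EReal) * (u : EReal)) = ((-((n : ℝ) * u) : ℝ) : EReal) by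
        rw [EReal.coe_neg, EReal.coe_mul, EReal.coe_coe_eq_natCast, neg_mul]]
      rw [EReal.exp_coe]
    have hreal : (∏ i, P (x i)) * (∏ i, P (y i)) ≤
        Real.exp (-(n * u)) * ((∏ i, empDist n x (x i)) * (∏ i, empDist n y (y i))) := by
      rw [hprod₁, hprod₂]
      have hexp : Real.exp (-(n * r₁)) * Real.exp (-(n * r₂)) ≤ Real.exp (-(n * u)) := by
        rw [← Real.exp_add]
        apply Real.exp_le_exp.mpr
        have : (n:ℝ) * u ≤ n * (r₁ + r₂) := by
          apply mul_le_mul_of_nonneg_left hur (Nat.cast_nonneg n)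
        nlinarith
      calc Real.exp (-(n * r₁)) * (∏ i, empDist n x (x i)) *
            (Real.exp (-(n * r₂)) * ∏ i, empDist n y (y i))
          = (Real.exp (-(n * r₁)) * Real.exp (-(n * r₂))) *
            ((∏ i, empDist n x (x i)) * (∏ i, empDist n y (y i))) := by ring
        _ ≤ _ := by
            apply mul_le_mul_of_nonneg_right hexp
            positivity
    calc ENNReal.ofReal ((∏ i, P (x i)) * (∏ i, P (y i)))
        ≤ ENNReal.ofReal (Real.exp (-(n * u)) *
            ((∏ i, empDist n x (x i)) * (∏ i, empDist n y (y i)))) :=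
          ENNReal.ofReal_le_ofReal hreal
      _ = E * (ENNReal.ofReal (∏ i, empDist n x (x i)) *
            ENNReal.ofReal (∏ i, empDist n y (y i))) := by
          rw [hEeq, ENNReal.ofReal_mul (Real.exp_nonneg _),
            ENNReal.ofReal_mul (le_of_lt hTxpos)]
  -- Step 3: sum the bound
  calc (∑ p : (Fin n → X) × (Fin n → X),
        ENNReal.ofReal (if lam < f (empDist n p.1) (empDist n p.2) then
          (∏ i, P (p.1 i)) * (∏ i, P (p.2 i)) else 0))
      ≤ ∑ p : (Fin n → X) × (Fin n → X),
          E * (ENNReal.ofReal (∏ i, empDist n p.1 (p.1 i)) *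
               ENNReal.ofReal (∏ i, empDist n p.2 (p.2 i))) :=
        Finset.sum_le_sum (fun p _ => key p)
    _ = E * ((∑ x : Fin n → X, ENNReal.ofReal (∏ i, empDist n x (x i))) *
             (∑ y : Fin n → X, ENNReal.ofReal (∏ i, empDist n y (y i)))) := by
        rw [← Finset.mul_sum]
        congr 1
        rw [Fintype.sum_prod_type, Finset.sum_mul_sum]
    _ ≤ E * ((((n + 1 : ℕ) : ENNReal)) ^ (Fintype.card X) *
             (((n + 1 : ℕ) : ENNReal)) ^ (Fintype.card X)) :=
        mul_le_mul_right (mul_le_mul' (sum_prod_emp_le hn) (sum_prod_emp_le hn)) E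
    _ = ((n + 1 : ENNReal)) ^ (2 * Fintype.card X) * E := by
        rw [← pow_add, two_mul, mul_comm]
        push_cast
        ring_nf
end
end
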